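/- Let X, Y, M be n×n SPD matrices. Define U = M (M^{-1} X M^{-1} Y)^{1/2} + (Y M^{-1} X M^{-1})^{1/2} M - 2X (the GBW logarithm), and let L = L_{X,M}[U] solve X L M + M L X = U. Then the GBW exponential applied to U recovers Y: X + U + M L X L M = Y. -/

import Mathlib

open Matrix

section Aux

variable {n : Type*} [Fintype n] [DecidableEq n]

/-- A matrix similar to a positive definite matrix is diagonalizable with positive
diagonal. -/
lemma simdiag {A : Matrix n n ℝ}
    (h : ∃ P : Matrix n n ℝ, IsUnit P.det ∧ (P * A * P⁻¹).PosDef) :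
    ∃ (V : Matrix n n ℝ) (d : n → ℝ), IsUnit V.det ∧ (∀ i, 0 < d i) ∧
      A = V * Matrix.diagonal d * V⁻¹ := by
  obtain ⟨P, hP, hPD⟩ := h
  haveI := P.invertibleOfIsUnitDet hP
  have hQH : (P * A * P⁻¹).IsHermitian := hPD.isHermitian
  have hspec := hQH.spectral_theorem
  set U : Matrix n n ℝ := (hQH.eigenvectorUnitary : Matrix n n ℝ) with hUdef
  have hUU : U * star U = 1 := (Matrix.mem_unitaryGroup_iff).mp hQH.eigenvectorUnitary.2
  have hUinv : U⁻¹ = star U := Matrix.inv_eq_right_inv hUU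
  have hUdet : IsUnit U.det := by
    apply isUnit_of_mul_isUnit_left (y := (star U).det)
    rw [← Matrix.det_mul, hUU, Matrix.det_one]
    exact isUnit_one
  haveI := U.invertibleOfIsUnitDet hUdet
  have hdiag : Matrix.diagonal ((RCLike.ofReal : ℝ → ℝ) ∘ hQH.eigenvalues)
      = Matrix.diagonal hQH.eigenvalues := by
    rw [RCLike.ofReal_real_eq_id]
    rfl
  refine ⟨P⁻¹ * U, hQH.eigenvalues, ?_, hPD.eigenvalues_pos, ?_⟩
  · rw [Matrix.det_mul]
    exact ((Matrix.isUnit_nonsing_inv_det P hP)).mul hUdet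
  · have hVinv : (P⁻¹ * U)⁻¹ = star U * P := by
      rw [Matrix.mul_inv_rev, hUinv, Matrix.nonsing_inv_nonsing_inv P hP]
    rw [hVinv]
    have hPAP : P⁻¹ * (P * A * P⁻¹) * P = A := by
      rw [show P⁻¹ * (P * A * P⁻¹) * P = P⁻¹ * (P * (A * (P⁻¹ * P))) by
          simp only [Matrix.mul_assoc],
        Matrix.nonsing_inv_mul P hP, Matrix.mul_one,
        Matrix.inv_mul_cancel_left_of_invertible]
    conv_lhs => rw [← hPAP, hspec]
    rw [hdiag]
    simp only [Unitary.conjStarAlgAut_apply]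
    rw [← hUdef]
    simp only [Matrix.mul_assoc]

/-- Two diagonalizable-with-positive-spectrum matrices with equal squares are equal. -/
lemma eq_of_sq_eq' {A B V W : Matrix n n ℝ} {d e : n → ℝ}
    (hV : IsUnit V.det) (hW : IsUnit W.det)
    (hd : ∀ i, 0 < d i) (he : ∀ i, 0 < e i)
    (hA : A = V * Matrix.diagonal d * V⁻¹) (hB : B = W * Matrix.diagonal e * W⁻¹)
    (hsq : A * A = B * B) : A = B := by
  haveI := V.invertibleOfIsUnitDet hV
  haveI := W.invertibleOfIsUnitDet hW
  have hAA : A * A = V * Matrix.diagonal (fun i => d i * d i) * V⁻¹ := by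
    rw [hA, show V * Matrix.diagonal d * V⁻¹ * (V * Matrix.diagonal d * V⁻¹)
        = V * (Matrix.diagonal d * (V⁻¹ * (V * (Matrix.diagonal d * V⁻¹)))) by
      simp only [Matrix.mul_assoc], Matrix.inv_mul_cancel_left_of_invertible,
      show V * (Matrix.diagonal d * (Matrix.diagonal d * V⁻¹))
        = V * (Matrix.diagonal d * Matrix.diagonal d) * V⁻¹ by simp only [Matrix.mul_assoc],
      Matrix.diagonal_mul_diagonal]
  have hBB : B * B = W * Matrix.diagonal (fun i => e i * e i) * W⁻¹ := by
    rw [hB, show W * Matrix.diagonal e * W⁻¹ * (W * Matrix.diagonal e * W⁻¹)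
        = W * (Matrix.diagonal e * (W⁻¹ * (W * (Matrix.diagonal e * W⁻¹)))) by
      simp only [Matrix.mul_assoc], Matrix.inv_mul_cancel_left_of_invertible,
      show W * (Matrix.diagonal e * (Matrix.diagonal e * W⁻¹))
        = W * (Matrix.diagonal e * Matrix.diagonal e) * W⁻¹ by simp only [Matrix.mul_assoc],
      Matrix.diagonal_mul_diagonal]
  have hC2 : (W⁻¹ * V) * Matrix.diagonal (fun i => d i * d i) = Matrix.diagonal (fun i => e i * e i) * (W⁻¹ * V) := by
    have h1 : W⁻¹ * (V * Matrix.diagonal (fun i => d i * d i) * V⁻¹) * V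
        = W⁻¹ * (W * Matrix.diagonal (fun i => e i * e i) * W⁻¹) * V := by
      rw [← hAA, ← hBB, hsq]
    calc (W⁻¹ * V) * Matrix.diagonal (fun i => d i * d i)
        = W⁻¹ * (V * Matrix.diagonal (fun i => d i * d i) * V⁻¹) * V := by
          rw [show W⁻¹ * (V * Matrix.diagonal (fun i => d i * d i) * V⁻¹) * V
            = W⁻¹ * (V * (Matrix.diagonal (fun i => d i * d i) * (V⁻¹ * V))) by simp only [Matrix.mul_assoc],
            Matrix.nonsing_inv_mul V hV, Matrix.mul_one, Matrix.mul_assoc]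
      _ = W⁻¹ * (W * Matrix.diagonal (fun i => e i * e i) * W⁻¹) * V := h1
      _ = Matrix.diagonal (fun i => e i * e i) * (W⁻¹ * V) := by
          rw [show W⁻¹ * (W * Matrix.diagonal (fun i => e i * e i) * W⁻¹) * V
            = W⁻¹ * (W * (Matrix.diagonal (fun i => e i * e i) * (W⁻¹ * V))) by simp only [Matrix.mul_assoc],
            Matrix.inv_mul_cancel_left_of_invertible]
  have hC1 : (W⁻¹ * V) * Matrix.diagonal d = Matrix.diagonal e * (W⁻¹ * V) := by
    ext i j
    rw [Matrix.mul_diagonal, Matrix.diagonal_mul]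
    by_cases hc : (W⁻¹ * V) i j = 0
    · rw [hc, zero_mul, mul_zero]
    · have h2 := congrFun (congrFun hC2 i) j
      rw [Matrix.mul_diagonal, Matrix.diagonal_mul] at h2
      rw [mul_comm (e i * e i) ((W⁻¹ * V) i j)] at h2
      have h3' : d j * d j = e i * e i := mul_left_cancel₀ hc h2
      have h4 : d j = e i := by
        rcases mul_self_eq_mul_self_iff.mp h3' with h | h
        · exact h
        · nlinarith [hd j, he i]
      rw [h4, mul_comm]
  have hVW : V = W * (W⁻¹ * V) := by
    rw [Matrix.mul_inv_cancel_left_of_invertible]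
  calc A = W * (W⁻¹ * V) * Matrix.diagonal d * V⁻¹ := by rw [hA, ← hVW]
    _ = W * ((W⁻¹ * V) * Matrix.diagonal d) * V⁻¹ := by simp only [Matrix.mul_assoc]
    _ = W * (Matrix.diagonal e * (W⁻¹ * V)) * V⁻¹ := by rw [hC1]
    _ = W * Matrix.diagonal e * (W⁻¹ * (V * V⁻¹)) := by simp only [Matrix.mul_assoc]
    _ = W * Matrix.diagonal e * W⁻¹ := by
        rw [Matrix.mul_nonsing_inv V hV, Matrix.mul_one]
    _ = B := hB.symm

/-- Uniqueness of the principal square root among matrices similar to SPD matrices. -/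
lemma sqrt_unique {A B : Matrix n n ℝ}
    (hA : ∃ P : Matrix n n ℝ, IsUnit P.det ∧ (P * A * P⁻¹).PosDef)
    (hB : ∃ P : Matrix n n ℝ, IsUnit P.det ∧ (P * B * P⁻¹).PosDef)
    (hsq : A * A = B * B) : A = B := by
  obtain ⟨V, d, hV, hd, hVA⟩ := simdiag hA
  obtain ⟨W, e, hW, he, hWB⟩ := simdiag hB
  exact eq_of_sq_eq' hV hW hd he hVA hWB hsq

omit [DecidableEq n] in
lemma trace_transpose_mul_self_eq_zero {A : Matrix n n ℝ}
    (h : Matrix.trace (Aᵀ * A) = 0) : A = 0 := by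
  have h' : ∑ j, ∑ i, A i j * A i j = 0 := by
    simpa [Matrix.trace, Matrix.diag, Matrix.mul_apply] using h
  ext i j
  have h1 := (Finset.sum_eq_zero_iff_of_nonneg
    (fun j _ => Finset.sum_nonneg fun i _ => mul_self_nonneg (A i j))).mp h' j
    (Finset.mem_univ j)
  have h2 := (Finset.sum_eq_zero_iff_of_nonneg
    (fun i _ => mul_self_nonneg (A i j))).mp h1 i (Finset.mem_univ i)
  simpa using mul_self_eq_zero.mp h2

open scoped MatrixOrder in
noncomputable def Matrix.PosSemidef.sqrt {A : Matrix n n ℝ} (_hA : A.PosSemidef) :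
    Matrix n n ℝ := CFC.sqrt A

open scoped MatrixOrder in
lemma Matrix.PosSemidef.sqrt_mul_self {A : Matrix n n ℝ} (hA : A.PosSemidef) :
    hA.sqrt * hA.sqrt = A := CFC.sqrt_mul_sqrt_self A hA.nonneg

open scoped MatrixOrder in
lemma Matrix.PosSemidef.posSemidef_sqrt {A : Matrix n n ℝ} (hA : A.PosSemidef) :
    hA.sqrt.PosSemidef := (CFC.sqrt_nonneg A).posSemidef

/-- Uniqueness for the generalized Lyapunov equation with SPD coefficients. -/
lemma lyap_unique {X M D : Matrix n n ℝ} (hX : X.PosDef) (hM : M.PosDef)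
    (hD : Dᵀ = D) (h : X * D * M + M * D * X = 0) : D = 0 := by
  set SX := hX.posSemidef.sqrt with hSX
  set SM := hM.posSemidef.sqrt with hSM
  have hSX2 : SX * SX = X := hX.posSemidef.sqrt_mul_self
  have hSM2 : SM * SM = M := hM.posSemidef.sqrt_mul_self
  have hSXs : SXᵀ = SX := by
    rw [← Matrix.conjTranspose_eq_transpose_of_trivial]
    exact hX.posSemidef.posSemidef_sqrt.isHermitian
  have hSMs : SMᵀ = SM := by
    rw [← Matrix.conjTranspose_eq_transpose_of_trivial]
    exact hM.posSemidef.posSemidef_sqrt.isHermitian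
  have hSXdet : IsUnit SX.det := by
    apply isUnit_of_mul_isUnit_left (y := SX.det)
    rw [← Matrix.det_mul, hSX2]
    exact hX.det_pos.ne'.isUnit
  have hSMdet : IsUnit SM.det := by
    apply isUnit_of_mul_isUnit_left (y := SM.det)
    rw [← Matrix.det_mul, hSM2]
    exact hM.det_pos.ne'.isUnit
  have ht0 : Matrix.trace (D * (X * D * M)) + Matrix.trace (D * (M * D * X)) = 0 := by
    rw [← Matrix.trace_add, ← Matrix.mul_add, h, Matrix.mul_zero, Matrix.trace_zero]
  have ht1 : Matrix.trace (D * (M * D * X)) = Matrix.trace (D * (X * D * M)) := by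
    calc Matrix.trace (D * (M * D * X)) = Matrix.trace ((D * M * D) * X) := by
          simp only [Matrix.mul_assoc]
      _ = Matrix.trace (X * (D * M * D)) := Matrix.trace_mul_comm _ _
      _ = Matrix.trace ((X * D * M) * D) := by simp only [Matrix.mul_assoc]
      _ = Matrix.trace (D * (X * D * M)) := Matrix.trace_mul_comm _ _
  have ht2 : Matrix.trace (D * (X * D * M)) = 0 := by linarith [ht0, ht1]
  have hGt : (SX * D * SM)ᵀ * (SX * D * SM) = SM * (D * (X * (D * SM))) := by
    rw [Matrix.transpose_mul (SX * D) SM, Matrix.transpose_mul SX D, hSXs, hSMs, hD,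
      ← hSX2]
    simp only [Matrix.mul_assoc]
  have htG : Matrix.trace ((SX * D * SM)ᵀ * (SX * D * SM)) = 0 := by
    rw [hGt]
    calc Matrix.trace (SM * (D * (X * (D * SM))))
        = Matrix.trace ((D * (X * (D * SM))) * SM) := Matrix.trace_mul_comm _ _
      _ = Matrix.trace (D * (X * D * (SM * SM))) := by simp only [Matrix.mul_assoc]
      _ = Matrix.trace (D * (X * D * M)) := by rw [hSM2]
      _ = 0 := ht2
  have hG0 : SX * D * SM = 0 := trace_transpose_mul_self_eq_zero htG
  haveI := SX.invertibleOfIsUnitDet hSXdet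
  haveI := SM.invertibleOfIsUnitDet hSMdet
  have hfin : SX⁻¹ * (SX * D * SM) * SM⁻¹ = SX⁻¹ * (0 : Matrix n n ℝ) * SM⁻¹ := by
    rw [hG0]
  rw [show SX⁻¹ * (SX * D * SM) * SM⁻¹ = SX⁻¹ * (SX * (D * (SM * SM⁻¹))) by
      simp only [Matrix.mul_assoc],
    Matrix.mul_nonsing_inv SM hSMdet, Matrix.mul_one,
    Matrix.inv_mul_cancel_left_of_invertible, Matrix.mul_zero, Matrix.zero_mul] at hfin
  exact hfin

end Aux

/-- The GBW exponential applied to the GBW logarithm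
U = M (M⁻¹XM⁻¹Y)^{1/2} + (YM⁻¹XM⁻¹)^{1/2} M - 2X recovers Y:
X + U + M L X L M = Y, where L solves X L M + M L X = U. R1, R2 are the principal
square roots of M⁻¹XM⁻¹Y and YM⁻¹XM⁻¹ (similar to SPD matrices). -/
theorem stmt14 {n : Type*} [Fintype n] [DecidableEq n]
    (X Y M R1 R2 L : Matrix n n ℝ)
    (hX : X.PosDef) (hY : Y.PosDef) (hM : M.PosDef)
    (hR1 : R1 * R1 = M⁻¹ * X * M⁻¹ * Y)
    (hR1sim : ∃ P : Matrix n n ℝ, IsUnit P.det ∧ (P * R1 * P⁻¹).PosDef)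
    (hR2 : R2 * R2 = Y * M⁻¹ * X * M⁻¹)
    (hR2sim : ∃ P : Matrix n n ℝ, IsUnit P.det ∧ (P * R2 * P⁻¹).PosDef)
    (hLsym : Lᵀ = L)
    (hL : X * L * M + M * L * X = M * R1 + R2 * M - (2 : ℝ) • X) :
    X + (M * R1 + R2 * M - (2 : ℝ) • X) + M * L * X * L * M = Y := by
  have hXdet : IsUnit X.det := hX.det_pos.ne'.isUnit
  have hMdet : IsUnit M.det := hM.det_pos.ne'.isUnit
  haveI := X.invertibleOfIsUnitDet hXdet
  haveI := M.invertibleOfIsUnitDet hMdet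
  have hXs : Xᵀ = X := by
    rw [← Matrix.conjTranspose_eq_transpose_of_trivial]; exact hX.isHermitian
  have hMs : Mᵀ = M := by
    rw [← Matrix.conjTranspose_eq_transpose_of_trivial]; exact hM.isHermitian
  have hYs : Yᵀ = Y := by
    rw [← Matrix.conjTranspose_eq_transpose_of_trivial]; exact hY.isHermitian
  have hMidet : IsUnit (M⁻¹).det := M.isUnit_nonsing_inv_det hMdet
  have hXidet : IsUnit (X⁻¹).det := X.isUnit_nonsing_inv_det hXdet
  have hMis : (M⁻¹)ᵀ = M⁻¹ := by rw [Matrix.transpose_nonsing_inv, hMs]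
  have hXis : (X⁻¹)ᵀ = X⁻¹ := by rw [Matrix.transpose_nonsing_inv, hXs]
  -- Step 1 : R1ᵀ = R2
  have hT : R1ᵀ = R2 := by
    apply sqrt_unique _ hR2sim
    · rw [← Matrix.transpose_mul, hR1, hR2]
      simp only [Matrix.transpose_mul, hXs, hYs, hMis, Matrix.mul_assoc]
    · obtain ⟨P, hP, hPD⟩ := hR1sim
      have hPtdet : IsUnit (Pᵀ).det := by rw [Matrix.det_transpose]; exact hP
      refine ⟨(Pᵀ)⁻¹, Pᵀ.isUnit_nonsing_inv_det hPtdet, ?_⟩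
      rw [Matrix.nonsing_inv_nonsing_inv Pᵀ hPtdet]
      have : (Pᵀ)⁻¹ * R1ᵀ * Pᵀ = (P * R1 * P⁻¹)ᵀ := by
        simp only [Matrix.transpose_mul, Matrix.transpose_nonsing_inv, Matrix.mul_assoc]
      rw [this]
      exact hPD.transpose
  -- Step 2 : the similarity S⁻¹ R1 S = R2 with S = M⁻¹ X M⁻¹
  set S : Matrix n n ℝ := M⁻¹ * X * M⁻¹ with hSdef
  haveI : Invertible (M⁻¹) := M⁻¹.invertibleOfIsUnitDet hMidet
  haveI : Invertible (M⁻¹ * X) := invertibleMul _ _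
  haveI : Invertible S := hSdef ▸ invertibleMul (M⁻¹ * X) (M⁻¹)
  have hSdet : IsUnit S.det := Matrix.isUnit_det_of_invertible S
  have hSR : S⁻¹ * R1 * S = R2 := by
    apply sqrt_unique _ hR2sim
    · rw [show S⁻¹ * R1 * S * (S⁻¹ * R1 * S) = S⁻¹ * (R1 * (S * (S⁻¹ * (R1 * S)))) by
        simp only [Matrix.mul_assoc], Matrix.mul_inv_cancel_left_of_invertible,
        show S⁻¹ * (R1 * (R1 * S)) = S⁻¹ * (R1 * R1) * S by simp only [Matrix.mul_assoc],
        hR1, Matrix.inv_mul_cancel_left_of_invertible, hR2, hSdef]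
      simp only [Matrix.mul_assoc]
    · obtain ⟨P, hP, hPD⟩ := hR1sim
      refine ⟨P * S, by rw [Matrix.det_mul]; exact hP.mul hSdet, ?_⟩
      have : P * S * (S⁻¹ * R1 * S) * (P * S)⁻¹ = P * R1 * P⁻¹ := by
        rw [Matrix.mul_inv_rev P S]
        rw [show P * S * (S⁻¹ * R1 * S) * (S⁻¹ * P⁻¹)
            = P * (S * (S⁻¹ * (R1 * (S * (S⁻¹ * P⁻¹))))) by simp only [Matrix.mul_assoc],
          Matrix.mul_inv_cancel_left_of_invertible,
          Matrix.mul_inv_cancel_left_of_invertible, Matrix.mul_assoc]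
      rw [this]
      exact hPD
  have hSinv : S⁻¹ = M * (X⁻¹ * M) := by
    rw [hSdef, Matrix.mul_inv_rev, Matrix.mul_inv_rev,
      Matrix.nonsing_inv_nonsing_inv M hMdet]
  have hRS : R2 * S⁻¹ = S⁻¹ * R1 := by
    rw [← hSR, show S⁻¹ * R1 * S * S⁻¹ = S⁻¹ * R1 * (S * S⁻¹) by simp only [Matrix.mul_assoc],
      Matrix.mul_inv_of_invertible, Matrix.mul_one]
  -- Step 3 : the explicit Lyapunov solution L₀
  set L₀ : Matrix n n ℝ := X⁻¹ * (M * R1 - X) * M⁻¹ with hL₀def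
  have hXLM : X * L₀ * M = M * R1 - X := by
    rw [hL₀def, show X * (X⁻¹ * (M * R1 - X) * M⁻¹) * M
        = X * (X⁻¹ * (M * R1 - X)) * (M⁻¹ * M) by simp only [Matrix.mul_assoc],
      Matrix.mul_inv_cancel_left_of_invertible, Matrix.inv_mul_of_invertible, Matrix.mul_one]
  have hMLX : M * L₀ * X = R2 * M - X := by
    rw [hL₀def]
    have expand : M * (X⁻¹ * (M * R1 - X) * M⁻¹) * X
        = M * (X⁻¹ * (M * R1)) * (M⁻¹ * X) - M * X⁻¹ * X * (M⁻¹ * X) := by noncomm_ring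
    rw [expand, show M * X⁻¹ * X * (M⁻¹ * X) = M * (X⁻¹ * X) * (M⁻¹ * X) by
        simp only [Matrix.mul_assoc],
      Matrix.inv_mul_of_invertible, Matrix.mul_one]
    have h1 : M * (X⁻¹ * (M * R1)) = S⁻¹ * R1 := by
      rw [hSinv]; simp only [Matrix.mul_assoc]
    rw [h1, ← hRS, hSinv]
    rw [show R2 * (M * (X⁻¹ * M)) * (M⁻¹ * X) = R2 * (M * (X⁻¹ * (M * (M⁻¹ * X)))) by
        simp only [Matrix.mul_assoc],
      Matrix.mul_inv_cancel_left_of_invertible, Matrix.inv_mul_of_invertible,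
      Matrix.mul_one]
  have hL₀sym : L₀ᵀ = L₀ := by
    have h2 : M * L₀ᵀ * X = M * L₀ * X := by
      have h3 : (X * L₀ * M)ᵀ = M * L₀ᵀ * X := by
        simp only [Matrix.transpose_mul, hXs, hMs, Matrix.mul_assoc]
      rw [← h3, hXLM, Matrix.transpose_sub, Matrix.transpose_mul, hXs, hMs, hT, hMLX]
    have h4 := congrArg (fun Z => M⁻¹ * Z * X⁻¹) h2
    simpa only [Matrix.mul_assoc, Matrix.mul_inv_of_invertible, Matrix.mul_one,
      Matrix.inv_mul_cancel_left_of_invertible] using h4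
  -- Step 4 : uniqueness gives L = L₀
  have hD0 : L - L₀ = 0 := by
    apply lyap_unique hX hM
    · rw [Matrix.transpose_sub, hLsym, hL₀sym]
    · have expand : X * (L - L₀) * M + M * (L - L₀) * X
          = (X * L * M + M * L * X) - (X * L₀ * M + M * L₀ * X) := by noncomm_ring
      rw [expand, hL, hXLM, hMLX, two_smul]
      abel
  have hLL₀ : L = L₀ := sub_eq_zero.mp hD0
  -- Step 5 : conclusion
  have hfin : R2 * (M * (X⁻¹ * (M * R1))) = Y := by
    have h5 : M * (X⁻¹ * (M * R1)) = S⁻¹ * R1 := by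
      rw [hSinv]; simp only [Matrix.mul_assoc]
    rw [h5, show R2 * (S⁻¹ * R1) = R2 * S⁻¹ * R1 by simp only [Matrix.mul_assoc], hRS,
      show S⁻¹ * R1 * R1 = S⁻¹ * (R1 * R1) by simp only [Matrix.mul_assoc],
      show R1 * R1 = S * Y from hR1, Matrix.inv_mul_cancel_left_of_invertible]
  rw [hLL₀]
  have hMLXLM : M * L₀ * X * L₀ * M = (R2 * M - X) * X⁻¹ * (M * R1 - X) := by
    rw [← hXLM, ← hMLX,
      show M * L₀ * X * X⁻¹ * (X * L₀ * M) = M * L₀ * (X * (X⁻¹ * (X * (L₀ * M)))) by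
        simp only [Matrix.mul_assoc],
      Matrix.mul_inv_cancel_left_of_invertible]
    simp only [Matrix.mul_assoc]
  rw [hMLXLM]
  have expand : (R2 * M - X) * X⁻¹ * (M * R1 - X)
      = R2 * M * X⁻¹ * (M * R1) - R2 * M * X⁻¹ * X - X * X⁻¹ * (M * R1) + X * X⁻¹ * X := by
    noncomm_ring
  rw [expand, Matrix.nonsing_inv_mul_cancel_right _ _ hXdet]
  simp only [Matrix.mul_inv_of_invertible, Matrix.one_mul]
  rw [show R2 * M * X⁻¹ * (M * R1) = R2 * (M * (X⁻¹ * (M * R1))) by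
      simp only [Matrix.mul_assoc],
    hfin, two_smul]
  abel
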